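/- arXiv:2003.10537 — 5 statements merged into one kernel-verified Lean document; each statement's English description precedes it below -/
import Mathlib

section
/- For any complex three-qubit tensor ψ, there exist 2×2 unitary matrices U, V, W and a core tensor t such that ψ_{j1 j2 j3} = Σ_{i1,i2,i3} U_{j1 i1} V_{j2 i2} W_{j3 i3} t_{i1 i2 i3}, and each of the three one-body reduced density matrices of t is diagonal with non-increasing diagonal entries. -/
/-- One-body reduced density matrices of a three-qubit tensor. -/
noncomputable def rhoA (t : Fin 2 × Fin 2 × Fin 2 → ℂ) : Matrix (Fin 2) (Fin 2) ℂ :=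
  fun j k => ∑ i2 : Fin 2, ∑ i3 : Fin 2, t (j, i2, i3) * star (t (k, i2, i3))

noncomputable def rhoB (t : Fin 2 × Fin 2 × Fin 2 → ℂ) : Matrix (Fin 2) (Fin 2) ℂ :=
  fun j k => ∑ i1 : Fin 2, ∑ i3 : Fin 2, t (i1, j, i3) * star (t (i1, k, i3))

noncomputable def rhoC (t : Fin 2 × Fin 2 × Fin 2 → ℂ) : Matrix (Fin 2) (Fin 2) ℂ :=
  fun j k => ∑ i1 : Fin 2, ∑ i2 : Fin 2, t (i1, i2, j) * star (t (i1, i2, k))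

open Matrix Kronecker

/-- Sorted diagonalization of a hermitian 2×2 matrix. -/
lemma diag2 (A : Matrix (Fin 2) (Fin 2) ℂ) (hA : A.IsHermitian) :
    ∃ U ∈ Matrix.unitaryGroup (Fin 2) ℂ, ∃ d : Fin 2 → ℝ,
      star U * A * U = Matrix.diagonal (fun i => (d i : ℂ)) ∧ d 1 ≤ d 0 := by
  classical
  set P : Matrix (Fin 2) (Fin 2) ℂ := (hA.eigenvectorUnitary : Matrix (Fin 2) (Fin 2) ℂ)
  have hP : P ∈ Matrix.unitaryGroup (Fin 2) ℂ := hA.eigenvectorUnitary.2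
  have hdiag : star P * A * P
      = Matrix.diagonal (fun i => ((hA.eigenvalues i : ℝ) : ℂ)) := by
    have := hA.conjStarAlgAut_star_eigenvectorUnitary
    simp only [Unitary.conjStarAlgAut_apply, Unitary.coe_star, star_star] at this
    exact this
  by_cases h : hA.eigenvalues 1 ≤ hA.eigenvalues 0
  · exact ⟨P, hP, hA.eigenvalues, hdiag, h⟩
  · set S : Matrix (Fin 2) (Fin 2) ℂ := !![0,1;1,0]
    have hS : S ∈ Matrix.unitaryGroup (Fin 2) ℂ := by
      rw [Matrix.mem_unitaryGroup_iff]
      ext i j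
      fin_cases i <;> fin_cases j <;>
        simp [S, Matrix.mul_apply, Fin.sum_univ_two, Matrix.star_eq_conjTranspose,
          Matrix.conjTranspose_apply, Matrix.one_apply]
    refine ⟨P * S, mul_mem hP hS, ![hA.eigenvalues 1, hA.eigenvalues 0], ?_, le_of_not_ge h⟩
    have : star (P * S) * A * (P * S) = star S * (star P * A * P) * S := by
      simp [Matrix.star_eq_conjTranspose, Matrix.conjTranspose_mul, Matrix.mul_assoc]
    rw [this, hdiag]
    ext i j
    fin_cases i <;> fin_cases j <;>
      simp [S, Matrix.mul_apply, Fin.sum_univ_two, Matrix.star_eq_conjTranspose,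
        Matrix.conjTranspose_apply, Matrix.diagonal]

lemma kron_conjT {m n p q : Type*} (A : Matrix m n ℂ) (B : Matrix p q ℂ) :
    (A ⊗ₖ B)ᴴ = Aᴴ ⊗ₖ Bᴴ := by
  ext ⟨i,j⟩ ⟨k,l⟩
  simp [Matrix.conjTranspose_apply, Matrix.kroneckerMap_apply, star_mul']

lemma mapstar_conjT {m n : Type*} (A : Matrix m n ℂ) :
    (A.map (starRingEnd ℂ))ᴴ = Aᵀ := by
  ext i j; simp

lemma conjT_mapstar {m n : Type*} (A : Matrix m n ℂ) :
    Aᴴ.map (starRingEnd ℂ) = Aᵀ := by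
  ext i j; simp

lemma kron_star_mul (V W : Matrix (Fin 2) (Fin 2) ℂ)
    (hV : V ∈ Matrix.unitaryGroup (Fin 2) ℂ) (hW : W ∈ Matrix.unitaryGroup (Fin 2) ℂ) :
    (V.map (starRingEnd ℂ) ⊗ₖ W.map (starRingEnd ℂ)) *
      (V.map (starRingEnd ℂ) ⊗ₖ W.map (starRingEnd ℂ))ᴴ = 1 := by
  rw [kron_conjT, ← Matrix.mul_kronecker_mul, mapstar_conjT, mapstar_conjT]
  have hv : V.map (starRingEnd ℂ) * Vᵀ = 1 := by
    have h1 : V * star V = 1 := Matrix.mem_unitaryGroup_iff.mp hV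
    have : (V * star V).map (starRingEnd ℂ) = (1 : Matrix (Fin 2) (Fin 2) ℂ) := by
      rw [h1]; exact Matrix.map_one _ (map_zero _) (map_one _)
    rwa [Matrix.map_mul (f := starRingEnd ℂ), Matrix.star_eq_conjTranspose,
      conjT_mapstar] at this
  have hw : W.map (starRingEnd ℂ) * Wᵀ = 1 := by
    have h1 : W * star W = 1 := Matrix.mem_unitaryGroup_iff.mp hW
    have : (W * star W).map (starRingEnd ℂ) = (1 : Matrix (Fin 2) (Fin 2) ℂ) := by
      rw [h1]; exact Matrix.map_one _ (map_zero _) (map_one _)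
    rwa [Matrix.map_mul (f := starRingEnd ℂ), Matrix.star_eq_conjTranspose,
      conjT_mapstar] at this
  rw [hv, hw, Matrix.one_kronecker_one]

def unf1 (t : Fin 2 × Fin 2 × Fin 2 → ℂ) : Matrix (Fin 2) (Fin 2 × Fin 2) ℂ :=
  Matrix.of fun j p => t (j, p.1, p.2)

def unf2 (t : Fin 2 × Fin 2 × Fin 2 → ℂ) : Matrix (Fin 2) (Fin 2 × Fin 2) ℂ :=
  Matrix.of fun j p => t (p.1, j, p.2)

def unf3 (t : Fin 2 × Fin 2 × Fin 2 → ℂ) : Matrix (Fin 2) (Fin 2 × Fin 2) ℂ :=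
  Matrix.of fun j p => t (p.1, p.2, j)

lemma rhoA_unf (t : Fin 2 × Fin 2 × Fin 2 → ℂ) : rhoA t = unf1 t * (unf1 t)ᴴ := by
  ext j k
  simp [rhoA, unf1, Matrix.mul_apply, Matrix.conjTranspose_apply, Fintype.sum_prod_type]

lemma rhoB_unf (t : Fin 2 × Fin 2 × Fin 2 → ℂ) : rhoB t = unf2 t * (unf2 t)ᴴ := by
  ext j k
  simp [rhoB, unf2, Matrix.mul_apply, Matrix.conjTranspose_apply, Fintype.sum_prod_type]

lemma rhoC_unf (t : Fin 2 × Fin 2 × Fin 2 → ℂ) : rhoC t = unf3 t * (unf3 t)ᴴ := by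
  ext j k
  simp [rhoC, unf3, Matrix.mul_apply, Matrix.conjTranspose_apply, Fintype.sum_prod_type]

lemma key (N : Matrix (Fin 2) (Fin 2 × Fin 2) ℂ) (U : Matrix (Fin 2) (Fin 2) ℂ)
    (K : Matrix (Fin 2 × Fin 2) (Fin 2 × Fin 2) ℂ) (hK : K * Kᴴ = 1) :
    (star U * N * K) * (star U * N * K)ᴴ = star U * (N * Nᴴ) * U := by
  simp only [Matrix.star_eq_conjTranspose, Matrix.conjTranspose_mul,
    Matrix.conjTranspose_conjTranspose, Matrix.mul_assoc]
  rw [← Matrix.mul_assoc K, hK, Matrix.one_mul]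

/-- Existence of HOSVD for 2×2×2 complex tensors. -/
theorem hosvd_exists (ψ : Fin 2 × Fin 2 × Fin 2 → ℂ) :
    ∃ (U V W : Matrix (Fin 2) (Fin 2) ℂ) (t : Fin 2 × Fin 2 × Fin 2 → ℂ),
      U ∈ Matrix.unitaryGroup (Fin 2) ℂ ∧
      V ∈ Matrix.unitaryGroup (Fin 2) ℂ ∧
      W ∈ Matrix.unitaryGroup (Fin 2) ℂ ∧
      (∀ j1 j2 j3 : Fin 2, ψ (j1, j2, j3) =
        ∑ i1 : Fin 2, ∑ i2 : Fin 2, ∑ i3 : Fin 2,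
          U j1 i1 * V j2 i2 * W j3 i3 * t (i1, i2, i3)) ∧
      rhoA t 0 1 = 0 ∧ rhoA t 1 0 = 0 ∧
      rhoB t 0 1 = 0 ∧ rhoB t 1 0 = 0 ∧
      rhoC t 0 1 = 0 ∧ rhoC t 1 0 = 0 ∧
      (rhoA t 1 1).re ≤ (rhoA t 0 0).re ∧
      (rhoB t 1 1).re ≤ (rhoB t 0 0).re ∧
      (rhoC t 1 1).re ≤ (rhoC t 0 0).re := by
  classical
  have hA : (rhoA ψ).IsHermitian := by
    rw [rhoA_unf]; exact Matrix.isHermitian_mul_conjTranspose_self _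
  have hB : (rhoB ψ).IsHermitian := by
    rw [rhoB_unf]; exact Matrix.isHermitian_mul_conjTranspose_self _
  have hC : (rhoC ψ).IsHermitian := by
    rw [rhoC_unf]; exact Matrix.isHermitian_mul_conjTranspose_self _
  obtain ⟨U, hU, dA, hUd, hdA⟩ := diag2 _ hA
  obtain ⟨V, hV, dB, hVd, hdB⟩ := diag2 _ hB
  obtain ⟨W, hW, dC, hWd, hdC⟩ := diag2 _ hC
  set t : Fin 2 × Fin 2 × Fin 2 → ℂ := fun p =>
    ∑ j1 : Fin 2, ∑ j2 : Fin 2, ∑ j3 : Fin 2,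
      star (U j1 p.1) * star (V j2 p.2.1) * star (W j3 p.2.2) * ψ (j1, j2, j3) with ht
  set KA := V.map (starRingEnd ℂ) ⊗ₖ W.map (starRingEnd ℂ) with hKAdef
  set KB := U.map (starRingEnd ℂ) ⊗ₖ W.map (starRingEnd ℂ) with hKBdef
  set KC := U.map (starRingEnd ℂ) ⊗ₖ V.map (starRingEnd ℂ) with hKCdef
  have hKA : KA * KAᴴ = 1 := kron_star_mul V W hV hW
  have hKB : KB * KBᴴ = 1 := kron_star_mul U W hU hW
  have hKC : KC * KCᴴ = 1 := kron_star_mul U V hU hV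
  have h1 : unf1 t = star U * unf1 ψ * KA := by
    ext a p
    obtain ⟨b, c⟩ := p
    simp only [unf1, ht, hKAdef, Matrix.of_apply, Matrix.mul_apply, Fintype.sum_prod_type,
      Fin.sum_univ_two, Matrix.kroneckerMap_apply, Matrix.map_apply,
      Matrix.star_eq_conjTranspose, Matrix.conjTranspose_apply, starRingEnd_apply]
    ring
  have h2 : unf2 t = star V * unf2 ψ * KB := by
    ext a p
    obtain ⟨b, c⟩ := p
    simp only [unf2, ht, hKBdef, Matrix.of_apply, Matrix.mul_apply, Fintype.sum_prod_type,
      Fin.sum_univ_two, Matrix.kroneckerMap_apply, Matrix.map_apply,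
      Matrix.star_eq_conjTranspose, Matrix.conjTranspose_apply, starRingEnd_apply]
    ring
  have h3 : unf3 t = star W * unf3 ψ * KC := by
    ext a p
    obtain ⟨b, c⟩ := p
    simp only [unf3, ht, hKCdef, Matrix.of_apply, Matrix.mul_apply, Fintype.sum_prod_type,
      Fin.sum_univ_two, Matrix.kroneckerMap_apply, Matrix.map_apply,
      Matrix.star_eq_conjTranspose, Matrix.conjTranspose_apply, starRingEnd_apply]
    ring
  have hrA : rhoA t = Matrix.diagonal (fun i => (dA i : ℂ)) := by
    rw [rhoA_unf, h1, key _ _ _ hKA, ← rhoA_unf, hUd]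
  have hrB : rhoB t = Matrix.diagonal (fun i => (dB i : ℂ)) := by
    rw [rhoB_unf, h2, key _ _ _ hKB, ← rhoB_unf, hVd]
  have hrC : rhoC t = Matrix.diagonal (fun i => (dC i : ℂ)) := by
    rw [rhoC_unf, h3, key _ _ _ hKC, ← rhoC_unf, hWd]
  have hUU : U * star U = 1 := Matrix.mem_unitaryGroup_iff.mp hU
  have hrec : unf1 ψ = U * unf1 t * KAᴴ := by
    rw [h1]
    simp only [Matrix.mul_assoc]
    rw [hKA, Matrix.mul_one, ← Matrix.mul_assoc U, hUU, Matrix.one_mul]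
  refine ⟨U, V, W, t, hU, hV, hW, ?_, ?_, ?_, ?_, ?_, ?_, ?_, ?_, ?_, ?_⟩
  · intro j1 j2 j3
    have h := congrFun (congrFun hrec j1) (j2, j3)
    have hl : unf1 ψ j1 (j2, j3) = ψ (j1, j2, j3) := rfl
    rw [hl] at h
    rw [h]
    simp only [hKAdef, Matrix.mul_apply, Fintype.sum_prod_type, Fin.sum_univ_two,
      Matrix.conjTranspose_apply, Matrix.kroneckerMap_apply, Matrix.map_apply,
      unf1, Matrix.of_apply, starRingEnd_apply, star_mul', star_star]
    ring
  · rw [hrA]; exact Matrix.diagonal_apply_ne _ (by decide)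
  · rw [hrA]; exact Matrix.diagonal_apply_ne _ (by decide)
  · rw [hrB]; exact Matrix.diagonal_apply_ne _ (by decide)
  · rw [hrB]; exact Matrix.diagonal_apply_ne _ (by decide)
  · rw [hrC]; exact Matrix.diagonal_apply_ne _ (by decide)
  · rw [hrC]; exact Matrix.diagonal_apply_ne _ (by decide)
  · rw [hrA]; simpa using hdA
  · rw [hrB]; simpa using hdB
  · rw [hrC]; simpa using hdC
end

section
/- Suppose a three-qubit core tensor t satisfies the three all-orthogonality conditions (vanishing off-diagonal entries of all three one-body reduced density matrices). Then |t_{112}|²(σ₁^(1)² − σ₁^(2)²) + |t_{211}|²(σ₁^(2)² − σ₁^(3)²) + |t_{121}|²(σ₁^(3)² − σ₁^(1)²) = 0, where σ₁^(n)² denotes the sum of |t|² over all entries whose n-th index equals 1. -/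
theorem allOrthogonality_implies_singular_value_relation
    (t : Fin 2 × Fin 2 × Fin 2 → ℂ)
    (h1 : star (t (0,0,0)) * t (1,0,0) + star (t (0,1,0)) * t (1,1,0)
      + star (t (0,0,1)) * t (1,0,1) + star (t (0,1,1)) * t (1,1,1) = 0)
    (h2 : star (t (0,0,0)) * t (0,1,0) + star (t (1,0,0)) * t (1,1,0)
      + star (t (0,0,1)) * t (0,1,1) + star (t (1,0,1)) * t (1,1,1) = 0)
    (h3 : star (t (0,0,0)) * t (0,0,1) + star (t (1,0,0)) * t (1,0,1)
      + star (t (0,1,0)) * t (0,1,1) + star (t (1,1,0)) * t (1,1,1) = 0) :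
    ‖t (0,0,1)‖ ^ 2 *
        ((‖t (0,0,0)‖ ^ 2 + ‖t (0,0,1)‖ ^ 2
            + ‖t (0,1,0)‖ ^ 2 + ‖t (0,1,1)‖ ^ 2)
          - (‖t (0,0,0)‖ ^ 2 + ‖t (0,0,1)‖ ^ 2
            + ‖t (1,0,0)‖ ^ 2 + ‖t (1,0,1)‖ ^ 2))
      + ‖t (1,0,0)‖ ^ 2 *
        ((‖t (0,0,0)‖ ^ 2 + ‖t (0,0,1)‖ ^ 2
            + ‖t (1,0,0)‖ ^ 2 + ‖t (1,0,1)‖ ^ 2)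
          - (‖t (0,0,0)‖ ^ 2 + ‖t (0,1,0)‖ ^ 2
            + ‖t (1,0,0)‖ ^ 2 + ‖t (1,1,0)‖ ^ 2))
      + ‖t (0,1,0)‖ ^ 2 *
        ((‖t (0,0,0)‖ ^ 2 + ‖t (0,1,0)‖ ^ 2
            + ‖t (1,0,0)‖ ^ 2 + ‖t (1,1,0)‖ ^ 2)
          - (‖t (0,0,0)‖ ^ 2 + ‖t (0,0,1)‖ ^ 2
            + ‖t (0,1,0)‖ ^ 2 + ‖t (0,1,1)‖ ^ 2)) = 0 := by
  set a := t (0,0,0)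
  set b := t (0,0,1)
  set c := t (0,1,0)
  set d := t (0,1,1)
  set e := t (1,0,0)
  set f := t (1,0,1)
  set g := t (1,1,0)
  set hh := t (1,1,1)
  have h1c : a * star e + c * star g + b * star f + d * star hh = 0 := by
    have := congrArg star h1
    simpa [star_add, star_mul, star_star, mul_comm] using this
  have h2c : a * star c + e * star g + b * star d + f * star hh = 0 := by
    have := congrArg star h2
    simpa [star_add, star_mul, star_star, mul_comm] using this
  have h3c : a * star b + e * star f + c * star d + g * star hh = 0 := by
    have := congrArg star h3
    simpa [star_add, star_mul, star_star, mul_comm] using this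
  have habs : ∀ z : ℂ, (‖z‖ : ℂ) ^ 2 = star z * z := by
    intro z
    rw [← Complex.ofReal_pow, Complex.sq_norm, Complex.normSq_eq_conj_mul_self]
    rfl
  have key : (‖b‖ : ℂ) ^ 2 *
        (((‖a‖ : ℂ) ^ 2 + (‖b‖ : ℂ) ^ 2
            + (‖c‖ : ℂ) ^ 2 + (‖d‖ : ℂ) ^ 2)
          - ((‖a‖ : ℂ) ^ 2 + (‖b‖ : ℂ) ^ 2
            + (‖e‖ : ℂ) ^ 2 + (‖f‖ : ℂ) ^ 2))
      + (‖e‖ : ℂ) ^ 2 *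
        (((‖a‖ : ℂ) ^ 2 + (‖b‖ : ℂ) ^ 2
            + (‖e‖ : ℂ) ^ 2 + (‖f‖ : ℂ) ^ 2)
          - ((‖a‖ : ℂ) ^ 2 + (‖c‖ : ℂ) ^ 2
            + (‖e‖ : ℂ) ^ 2 + (‖g‖ : ℂ) ^ 2))
      + (‖c‖ : ℂ) ^ 2 *
        (((‖a‖ : ℂ) ^ 2 + (‖c‖ : ℂ) ^ 2
            + (‖e‖ : ℂ) ^ 2 + (‖g‖ : ℂ) ^ 2)
          - ((‖a‖ : ℂ) ^ 2 + (‖b‖ : ℂ) ^ 2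
            + (‖c‖ : ℂ) ^ 2 + (‖d‖ : ℂ) ^ 2)) = 0 := by
    simp only [habs]
    linear_combination (1/2 : ℂ) * ((c * star g - b * star f) * h1
      + (b * star d - e * star g) * h2 + (e * star f - c * star d) * h3
      + (g * star c - f * star b) * h1c + (d * star b - g * star e) * h2c
      + (f * star e - d * star c) * h3c)
  exact_mod_cast key
end

section
/- Suppose a three-qubit core tensor t satisfies the three all-orthogonality conditions. Then conj(t_{112})conj(t_{221})(t_{122}t_{211} − t_{121}t_{212}) + conj(t_{121})conj(t_{212})(t_{112}t_{221} − t_{122}t_{211}) + conj(t_{122})conj(t_{211})(t_{121}t_{212} − t_{112}t_{221}) = 0. -/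
theorem allOrthogonality_implies_phase_relation
    (t : Fin 2 × Fin 2 × Fin 2 → ℂ)
    (h1 : star (t (0,0,0)) * t (1,0,0) + star (t (0,1,0)) * t (1,1,0)
      + star (t (0,0,1)) * t (1,0,1) + star (t (0,1,1)) * t (1,1,1) = 0)
    (h2 : star (t (0,0,0)) * t (0,1,0) + star (t (1,0,0)) * t (1,1,0)
      + star (t (0,0,1)) * t (0,1,1) + star (t (1,0,1)) * t (1,1,1) = 0)
    (h3 : star (t (0,0,0)) * t (0,0,1) + star (t (1,0,0)) * t (1,0,1)
      + star (t (0,1,0)) * t (0,1,1) + star (t (1,1,0)) * t (1,1,1) = 0) :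
    star (t (0,0,1)) * star (t (1,1,0))
        * (t (0,1,1) * t (1,0,0) - t (0,1,0) * t (1,0,1))
      + star (t (0,1,0)) * star (t (1,0,1))
        * (t (0,0,1) * t (1,1,0) - t (0,1,1) * t (1,0,0))
      + star (t (0,1,1)) * star (t (1,0,0))
        * (t (0,1,0) * t (1,0,1) - t (0,0,1) * t (1,1,0)) = 0 := by
  have h1c : t (0,0,0) * star (t (1,0,0)) + t (0,1,0) * star (t (1,1,0))
      + t (0,0,1) * star (t (1,0,1)) + t (0,1,1) * star (t (1,1,1)) = 0 := by
    have := congrArg star h1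
    simpa [mul_comm] using this
  have h2c : t (0,0,0) * star (t (0,1,0)) + t (1,0,0) * star (t (1,1,0))
      + t (0,0,1) * star (t (0,1,1)) + t (1,0,1) * star (t (1,1,1)) = 0 := by
    have := congrArg star h2
    simpa [mul_comm] using this
  have h3c : t (0,0,0) * star (t (0,0,1)) + t (1,0,0) * star (t (1,0,1))
      + t (0,1,0) * star (t (0,1,1)) + t (1,1,0) * star (t (1,1,1)) = 0 := by
    have := congrArg star h3
    simpa [mul_comm] using this
  linear_combination
      (-(1:ℂ)/2) * star (t (1,1,0)) * t (0,1,0) * h1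
    + ((1:ℂ)/2) * star (t (1,0,1)) * t (0,0,1) * h1
    + (-(1:ℂ)/2) * star (t (0,1,1)) * t (0,0,1) * h2
    + ((1:ℂ)/2) * star (t (1,1,0)) * t (1,0,0) * h2
    + ((1:ℂ)/2) * star (t (0,1,1)) * t (0,1,0) * h3
    + (-(1:ℂ)/2) * star (t (1,0,1)) * t (1,0,0) * h3
    + ((1:ℂ)/2) * star (t (0,1,0)) * t (1,1,0) * h1c
    + (-(1:ℂ)/2) * star (t (0,0,1)) * t (1,0,1) * h1c
    + ((1:ℂ)/2) * star (t (0,0,1)) * t (0,1,1) * h2c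
    + (-(1:ℂ)/2) * star (t (1,0,0)) * t (1,1,0) * h2c
    + (-(1:ℂ)/2) * star (t (0,1,0)) * t (0,1,1) * h3c
    + ((1:ℂ)/2) * star (t (1,0,0)) * t (1,0,1) * h3c
end

section
/- A three-qubit state ψ is bi-separable as C|AB (i.e. ψ_{i1 i2 i3} = a_{i1 i2} c_{i3} for some a : Fin 2 × Fin 2 → ℂ and c : Fin 2 → ℂ) if and only if the six conditions ψ_{111}ψ_{222}=ψ_{112}ψ_{221}, ψ_{111}ψ_{212}=ψ_{211}ψ_{112}, ψ_{121}ψ_{222}=ψ_{221}ψ_{122}, ψ_{111}ψ_{122}=ψ_{112}ψ_{121}, ψ_{211}ψ_{222}=ψ_{212}ψ_{221}, ψ_{211}ψ_{122}=ψ_{212}ψ_{121} hold. -/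
theorem biseparable_CAB_iff
    (ψ : Fin 2 × Fin 2 × Fin 2 → ℂ) :
    (∃ (a : Fin 2 × Fin 2 → ℂ) (c : Fin 2 → ℂ),
        ∀ i1 i2 i3 : Fin 2, ψ (i1, i2, i3) = a (i1, i2) * c i3)
    ↔ (ψ (0,0,0) * ψ (1,1,1) = ψ (0,0,1) * ψ (1,1,0)
      ∧ ψ (0,0,0) * ψ (1,0,1) = ψ (1,0,0) * ψ (0,0,1)
      ∧ ψ (0,1,0) * ψ (1,1,1) = ψ (1,1,0) * ψ (0,1,1)
      ∧ ψ (0,0,0) * ψ (0,1,1) = ψ (0,0,1) * ψ (0,1,0)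
      ∧ ψ (1,0,0) * ψ (1,1,1) = ψ (1,0,1) * ψ (1,1,0)
      ∧ ψ (1,0,0) * ψ (0,1,1) = ψ (1,0,1) * ψ (0,1,0)) := by
  have two : ∀ i : Fin 2, i = 0 ∨ i = 1 := by decide
  constructor
  · rintro ⟨a, c, h⟩
    refine ⟨?_, ?_, ?_, ?_, ?_, ?_⟩ <;> simp only [h] <;> ring
  · rintro ⟨h1, h2, h3, h4, h5, h6⟩
    by_cases H : ψ (0,0,0) = 0 ∧ ψ (0,1,0) = 0 ∧ ψ (1,0,0) = 0 ∧ ψ (1,1,0) = 0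
    · obtain ⟨e1, e2, e3, e4⟩ := H
      refine ⟨fun r => ψ (r.1, r.2, 1), fun k => if k = 0 then 0 else 1, ?_⟩
      intro i1 i2 i3
      rcases two i1 with rfl | rfl <;> rcases two i2 with rfl | rfl <;>
        rcases two i3 with rfl | rfl <;> simp <;> first | exact e1 | exact e2 | exact e3 | exact e4
    · have key : ∀ p q : Fin 2, ψ (p, q, 0) ≠ 0 →
          (∀ i j : Fin 2, ψ (i, j, 1) * ψ (p, q, 0) = ψ (i, j, 0) * ψ (p, q, 1)) →
          ∃ (a : Fin 2 × Fin 2 → ℂ) (c : Fin 2 → ℂ),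
            ∀ i1 i2 i3 : Fin 2, ψ (i1, i2, i3) = a (i1, i2) * c i3 := by
        intro p q hpq hall
        refine ⟨fun r => ψ (r.1, r.2, 0), fun k => ψ (p, q, k) / ψ (p, q, 0), ?_⟩
        intro i1 i2 i3
        rcases two i3 with rfl | rfl
        · field_simp
        · have h := hall i1 i2
          field_simp
          linear_combination h
      rw [not_and_or, not_and_or, not_and_or] at H
      rcases H with h | h | h | h
      · refine key 0 0 h ?_
        intro i j
        rcases two i with rfl | rfl <;> rcases two j with rfl | rfl
        · ring
        · linear_combination h4
        · linear_combination h2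
        · linear_combination h1
      · refine key 0 1 h ?_
        intro i j
        rcases two i with rfl | rfl <;> rcases two j with rfl | rfl
        · linear_combination -h4
        · ring
        · linear_combination -h6
        · linear_combination h3
      · refine key 1 0 h ?_
        intro i j
        rcases two i with rfl | rfl <;> rcases two j with rfl | rfl
        · linear_combination -h2
        · linear_combination h6
        · ring
        · linear_combination h5
      · refine key 1 1 h ?_
        intro i j
        rcases two i with rfl | rfl <;> rcases two j with rfl | rfl
        · linear_combination -h1
        · linear_combination -h3
        · linear_combination -h5
        · ring
end

section
/- Let t define the state |S₁⟩ = t_{111}|111⟩ + t_{112}|112⟩ + t_{221}|221⟩ + t_{222}|222⟩, normalized, satisfying conj(t_{111})t_{112} + conj(t_{221})t_{222} = 0 with t_{222} ≠ 0. Then σ₁^(3)² = |t_{111}|²/(|t_{111}|² + |t_{222}|²) and σ₂^(3)² = |t_{222}|²/(|t_{111}|² + |t_{222}|²). -/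
theorem S1_state_third_mode_singular_values
    (t : Fin 2 × Fin 2 × Fin 2 → ℂ)
    (hz1 : t (0,1,0) = 0) (hz2 : t (0,1,1) = 0)
    (hz3 : t (1,0,0) = 0) (hz4 : t (1,0,1) = 0)
    (hnorm : ‖t (0,0,0)‖ ^ 2 + ‖t (0,0,1)‖ ^ 2
      + ‖t (1,1,0)‖ ^ 2 + ‖t (1,1,1)‖ ^ 2 = 1)
    (hortho : star (t (0,0,0)) * t (0,0,1) + star (t (1,1,0)) * t (1,1,1) = 0)
    (ht222 : t (1,1,1) ≠ 0) :
    ‖t (0,0,0)‖ ^ 2 + ‖t (1,1,0)‖ ^ 2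
      = ‖t (0,0,0)‖ ^ 2
        / (‖t (0,0,0)‖ ^ 2 + ‖t (1,1,1)‖ ^ 2)
    ∧ ‖t (0,0,1)‖ ^ 2 + ‖t (1,1,1)‖ ^ 2
      = ‖t (1,1,1)‖ ^ 2
        / (‖t (0,0,0)‖ ^ 2 + ‖t (1,1,1)‖ ^ 2) := by
  set a := ‖t (0,0,0)‖
  set b := ‖t (0,0,1)‖
  set c := ‖t (1,1,0)‖
  set d := ‖t (1,1,1)‖
  have hd : 0 < d := by simpa [d] using (norm_pos_iff.mpr ht222)
  have heq : star (t (0,0,0)) * t (0,0,1) = -(star (t (1,1,0)) * t (1,1,1)) := by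
    linear_combination hortho
  have hab : a * b = c * d := by
    have := congrArg (‖·‖) heq
    simpa [map_mul, Complex.norm_def, a, b, c, d, mul_comm] using this
  have hpos : 0 < a ^ 2 + d ^ 2 := by positivity
  have hab2 : (a * b) ^ 2 = (c * d) ^ 2 := by rw [hab]
  constructor
  · field_simp
    linear_combination a ^ 2 * hnorm - hab2
  · field_simp
    linear_combination d ^ 2 * hnorm + hab2
end
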